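/- Soft policy improvement: in a finite-state, finite-action MDP, if π' is the greedy stochastic policy with respect to the soft Q-function Q^π (i.e., π'(·|s) maximizes Σ_a ρ(a)(Q^π(s,a) − α log ρ(a)) over distributions ρ), then the soft value satisfies V^{π'}(s) ≥ V^π(s) for all states s. -/
import Mathlib


/-- The soft Bellman backup operator for a fixed stochastic policy. -/
noncomputable def softBellman {S A : Type*} [Fintype S] [Fintype A]
    (r : S → A → ℝ) (P : S → A → S → ℝ) (pol : S → A → ℝ) (γ α : ℝ)
    (Q : S → A → ℝ) : S → A → ℝ :=
  fun s a => r s a + γ * ∑ s' : S, P s a s' *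
    ∑ a' : A, pol s' a' * (Q s' a' - α * Real.log (pol s' a'))

/-- The soft value function `V^π(s) = Σ_a π(a|s)(Q(s,a) − α log π(a|s))`. -/
noncomputable def softValue {S A : Type*} [Fintype A]
    (pol : S → A → ℝ) (α : ℝ) (Q : S → A → ℝ) (s : S) : ℝ :=
  ∑ a : A, pol s a * (Q s a - α * Real.log (pol s a))

/-- Soft policy improvement: if `π'` is greedy with respect to
the soft Q-function `Q^π` (it maximizes the entropy-regularized one-step value
over all action distributions), then `V^{π'}(s) ≥ V^π(s)` for all `s`. -/
theorem soft_policy_improvement {S A : Type*} [Fintype S] [Fintype A]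
    [Nonempty S] [Nonempty A]
    (r : S → A → ℝ) (P : S → A → S → ℝ) (γ α : ℝ)
    (hγ0 : 0 ≤ γ) (hγ1 : γ < 1) (hα : 0 < α)
    (hP0 : ∀ s a s', 0 ≤ P s a s') (hP1 : ∀ s a, ∑ s' : S, P s a s' = 1)
    (pol pol' : S → A → ℝ)
    (hpol_pos : ∀ s a, 0 < pol s a) (hpol1 : ∀ s, ∑ a : A, pol s a = 1)
    (hpol'_pos : ∀ s a, 0 < pol' s a) (hpol'1 : ∀ s, ∑ a : A, pol' s a = 1)
    (Qpi Qpi' : S → A → ℝ)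
    (hfix : softBellman r P pol γ α Qpi = Qpi)
    (hfix' : softBellman r P pol' γ α Qpi' = Qpi')
    (hgreedy : ∀ s, ∀ ρ : A → ℝ, (∀ a, 0 ≤ ρ a) → ∑ a : A, ρ a = 1 →
      ∑ a : A, ρ a * (Qpi s a - α * Real.log (ρ a)) ≤
        ∑ a : A, pol' s a * (Qpi s a - α * Real.log (pol' s a))) :
    ∀ s, softValue pol α Qpi s ≤ softValue pol' α Qpi' s := by
  -- pointwise fixed-point equations
  have hfixa : ∀ s a, Qpi s a = r s a + γ * ∑ s' : S, P s a s' *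
      ∑ a' : A, pol s' a' * (Qpi s' a' - α * Real.log (pol s' a')) := by
    intro s a
    have := congrFun (congrFun hfix s) a
    simpa [softBellman] using this.symm
  have hfixa' : ∀ s a, Qpi' s a = r s a + γ * ∑ s' : S, P s a s' *
      ∑ a' : A, pol' s' a' * (Qpi' s' a' - α * Real.log (pol' s' a')) := by
    intro s a
    have := congrFun (congrFun hfix' s) a
    simpa [softBellman] using this.symm
  -- key: Qpi ≤ Qpi'
  have hQle : ∀ s a, Qpi s a ≤ Qpi' s a := by
    set D : S × A → ℝ := fun p => Qpi p.1 p.2 - Qpi' p.1 p.2 with hD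
    have hne : (Finset.univ : Finset (S × A)).Nonempty := Finset.univ_nonempty
    set M := Finset.univ.sup' hne D with hMdef
    have hDleM : ∀ s a, Qpi s a - Qpi' s a ≤ M := fun s a =>
      Finset.le_sup' D (Finset.mem_univ (s, a))
    have key : ∀ p : S × A, D p ≤ γ * M := by
      rintro ⟨s, a⟩
      -- for each next state s', the inner difference is ≤ M
      have hinner : ∀ s' : S,
          (∑ a' : A, pol s' a' * (Qpi s' a' - α * Real.log (pol s' a'))) -
          (∑ a' : A, pol' s' a' * (Qpi' s' a' - α * Real.log (pol' s' a'))) ≤ M := by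
        intro s'
        have h1 := hgreedy s' (pol s') (fun a => (hpol_pos s' a).le) (hpol1 s')
        have h2 : (∑ a' : A, pol' s' a' * (Qpi s' a' - α * Real.log (pol' s' a'))) -
            (∑ a' : A, pol' s' a' * (Qpi' s' a' - α * Real.log (pol' s' a'))) ≤ M := by
          rw [← Finset.sum_sub_distrib]
          have : ∀ a' ∈ Finset.univ, pol' s' a' * (Qpi s' a' - α * Real.log (pol' s' a')) -
              pol' s' a' * (Qpi' s' a' - α * Real.log (pol' s' a')) ≤ pol' s' a' * M := by
            intro a' _
            have : pol' s' a' * (Qpi s' a' - α * Real.log (pol' s' a')) -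
                pol' s' a' * (Qpi' s' a' - α * Real.log (pol' s' a'))
                = pol' s' a' * (Qpi s' a' - Qpi' s' a') := by ring
            rw [this]
            exact mul_le_mul_of_nonneg_left (hDleM s' a') (hpol'_pos s' a').le
          calc _ ≤ ∑ a' : A, pol' s' a' * M := Finset.sum_le_sum this
            _ = (∑ a' : A, pol' s' a') * M := by rw [Finset.sum_mul]
            _ = M := by rw [hpol'1 s', one_mul]
        linarith
      have hsum : ∑ s' : S, P s a s' *
          ((∑ a' : A, pol s' a' * (Qpi s' a' - α * Real.log (pol s' a'))) -
           (∑ a' : A, pol' s' a' * (Qpi' s' a' - α * Real.log (pol' s' a')))) ≤ M := by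
        calc ∑ s' : S, P s a s' * _ ≤ ∑ s' : S, P s a s' * M :=
              Finset.sum_le_sum (fun s' _ =>
                mul_le_mul_of_nonneg_left (hinner s') (hP0 s a s'))
          _ = (∑ s' : S, P s a s') * M := by rw [Finset.sum_mul]
          _ = M := by rw [hP1 s a, one_mul]
      have hDeq : D (s, a) = γ * ∑ s' : S, P s a s' *
          ((∑ a' : A, pol s' a' * (Qpi s' a' - α * Real.log (pol s' a'))) -
           (∑ a' : A, pol' s' a' * (Qpi' s' a' - α * Real.log (pol' s' a')))) := by
        simp only [hD]
        have hsplit : ∑ s' : S, P s a s' *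
            ((∑ a' : A, pol s' a' * (Qpi s' a' - α * Real.log (pol s' a'))) -
             (∑ a' : A, pol' s' a' * (Qpi' s' a' - α * Real.log (pol' s' a'))))
            = ∑ s' : S, (P s a s' * (∑ a' : A, pol s' a' * (Qpi s' a' - α * Real.log (pol s' a')))
              - P s a s' * (∑ a' : A, pol' s' a' * (Qpi' s' a' - α * Real.log (pol' s' a')))) := by
          simp [mul_sub]
        rw [hfixa s a, hfixa' s a, hsplit, Finset.sum_sub_distrib]
        ring
      rw [hDeq]
      exact mul_le_mul_of_nonneg_left hsum hγ0
    have hMle : M ≤ γ * M := Finset.sup'_le hne D (fun p _ => key p)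
    have hM0 : M ≤ 0 := by nlinarith
    intro s a
    have := hDleM s a
    linarith
  -- conclude
  intro s
  have h1 := hgreedy s (pol s) (fun a => (hpol_pos s a).le) (hpol1 s)
  have h2 : ∑ a : A, pol' s a * (Qpi s a - α * Real.log (pol' s a)) ≤
      ∑ a : A, pol' s a * (Qpi' s a - α * Real.log (pol' s a)) := by
    refine Finset.sum_le_sum fun a _ => ?_
    exact mul_le_mul_of_nonneg_left (by linarith [hQle s a]) (hpol'_pos s a).le
  simpa [softValue] using le_trans h1 h2
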